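/- Let (D, F) be a consistent classical-deterministic causal model, and call a model reachable from (D, F) if it is obtained by a finite sequence of steps, each step fixing an output value o_s of a source vertex s of the current model's causal structure, passing to the reduced model, and restricting its causal structure to the dependency graph of the reduced parameters. Suppose that every reachable model with at least two vertices has at least one source vertex in its (dependency-graph) causal structure. Then for every family of interventions (μ_v)_{v∈V}, the attained correlation p(a|x) = [g(x) = a] is a causal correlation. -/

import Mathlib

set_option autoImplicit false

/-- A function `f` on a dependent product depends only on the coordinates in `S`:
its value is unchanged when the argument is modified outside of `S`. -/
def DependsOnlyOn {V : Type} {O : V → Type} {α : Type} (f : (∀ v, O v) → α) (S : Set V) : Prop :=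
  ∀ o o' : ∀ v, O v, (∀ v ∈ S, o v = o' v) → f o = f o'

/-- A function `f` on a dependent product depends nontrivially on the coordinate `ℓ`:
there are two arguments that differ only at `ℓ` and get assigned different values. -/
def DependsNontriv {V : Type} {O : V → Type} {α : Type} (f : (∀ v, O v) → α) (ℓ : V) : Prop :=
  ∃ o o' : ∀ v, O v, (∀ k, k ≠ ℓ → o k = o' k) ∧ f o ≠ f o'

/-- `c` is a directed cycle (of length `n`, with pairwise distinct vertices) in the
digraph with edge relation `E`. -/
def IsDirCycle {V : Type} (E : V → V → Prop) {n : ℕ} (c : ZMod n → V) : Prop :=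
  0 < n ∧ Function.Injective c ∧ ∀ i, E (c i) (c (i + 1))

/-- The directed cycle `c` has a chord: an edge `c i → c j` with `j ≠ i + 1 (mod n)`. -/
def HasChord {V : Type} (E : V → V → Prop) {n : ℕ} (c : ZMod n → V) : Prop :=
  ∃ i j : ZMod n, E (c i) (c j) ∧ j ≠ i + 1

/-- A digraph is a siblings-on-cycles graph if every directed cycle contains two
(distinct) vertices that share a common parent. -/
def SiblingsOnCycles {V : Type} (E : V → V → Prop) : Prop :=
  ∀ (n : ℕ) (c : ZMod n → V), IsDirCycle E c →
    ∃ i j : ZMod n, i ≠ j ∧ ∃ p, E p (c i) ∧ E p (c j)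

open Classical in
/-- The deterministic correlation `p(a|x) = [g(x) = a]` induced by a function `g`. -/
noncomputable def detCorr {V : Type} {X A : V → Type} (g : (∀ v, X v) → ∀ v, A v) :
    (∀ v, X v) → (∀ v, A v) → ℝ :=
  fun x a => if a = g x then 1 else 0

/-- A classical-deterministic causal model: a finite vertex set `V`, a digraph `E`
(the causal structure), finite nonempty output- and input-sets `O v`, `I v`, and the
model parameters `ω v : (∀ ℓ, O ℓ) → I v`.  (That `ω v` only depends on the
coordinates of the parents of `v` is expressed by `StructComp` below.) -/
structure CDModel where
  V : Type
  [fintV : Fintype V]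
  [decV : DecidableEq V]
  E : V → V → Prop
  O : V → Type
  I : V → Type
  [fintO : ∀ v, Fintype (O v)]
  [neO : ∀ v, Nonempty (O v)]
  [fintI : ∀ v, Fintype (I v)]
  [neI : ∀ v, Nonempty (I v)]
  ω : ∀ v, (∀ ℓ, O ℓ) → I v

attribute [instance] CDModel.fintV CDModel.decV CDModel.fintO CDModel.neO CDModel.fintI CDModel.neI

namespace CDModel

variable (M : CDModel)

/-- The parents of `v`. -/
def Pa (v : M.V) : Set M.V := {k | M.E k v}

/-- The children of `s`. -/
def Ch (s : M.V) : Set M.V := {v | M.E s v}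

/-- A source vertex: a vertex without parents. -/
def IsSource (s : M.V) : Prop := ∀ k, ¬ M.E k s

/-- The digraph `E` is a causal structure for the model parameters, i.e. each `ω v`
is a function of the outputs of the parents of `v` only. -/
def StructComp : Prop := ∀ v, DependsOnlyOn (M.ω v) (M.Pa v)

/-- Faithfulness: each `ω v` depends nontrivially on each of the parents of `v`. -/
def Faithful : Prop := ∀ ℓ v, M.E ℓ v → DependsNontriv (M.ω v) ℓ

open Classical in
/-- `g` witnesses the consistency condition for the interventions `μ`: for all
settings `x` and results `a`, the number of pairs `(i, o)` with `ω v o = i v` and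
`μ v (x v, i v) = (a v, o v)` (for all `v`) is `1` if `a = g x` and `0` otherwise. -/
def IsWitness (X A : M.V → Type) (μ : ∀ v, X v × M.I v → A v × M.O v)
    (g : (∀ v, X v) → ∀ v, A v) : Prop :=
  ∀ (x : ∀ v, X v) (a : ∀ v, A v),
    Nat.card {io : (∀ v, M.I v) × (∀ v, M.O v) //
      (∀ v, M.ω v io.2 = io.1 v) ∧ ∀ v, μ v (x v, io.1 v) = (a v, io.2 v)} =
    if a = g x then 1 else 0

/-- Consistency: every family of interventions admits a witnessing function `g`. -/
def Consistent : Prop :=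
  ∀ (X A : M.V → Type)
    (_ : ∀ v, Fintype (X v)) (_ : ∀ v, Nonempty (X v))
    (_ : ∀ v, Fintype (A v)) (_ : ∀ v, Nonempty (A v))
    (μ : ∀ v, X v × M.I v → A v × M.O v),
    ∃ g : (∀ v, X v) → ∀ v, A v, M.IsWitness X A μ g

/-- Extend an assignment of outputs on `V ∖ {s}` to all of `V` by putting `os` at `s`. -/
def extendAt (s : M.V) (os : M.O s) (o : ∀ v : {v : M.V // v ≠ s}, M.O v.1) (ℓ : M.V) :
    M.O ℓ :=
  if h : ℓ = s then cast (congrArg M.O h.symm) os else o ⟨ℓ, h⟩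

/-- The reduced causal model obtained by fixing the output `os` of the source `s`:
the vertex `s` and all its incident edges are removed, and each model parameter is
partially applied at the coordinate `s` (which keeps `ω v` unchanged for non-children
of `s`). -/
def reduce (s : M.V) (os : M.O s) : CDModel where
  V := {v : M.V // v ≠ s}
  E := fun a b => M.E a.1 b.1
  O := fun v => M.O v.1
  I := fun v => M.I v.1
  ω := fun v o => M.ω v.1 (M.extendAt s os o)

/-- The dependency graph of the model parameters: edge `ℓ → v` iff `ω v` depends
nontrivially on its `O ℓ`-coordinate. -/
def depGraph : M.V → M.V → Prop := fun ℓ v => DependsNontriv (M.ω v) ℓ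

/-- Replace the causal structure by the dependency graph of the model parameters. -/
def restrictDep : CDModel where
  V := M.V
  E := M.depGraph
  O := M.O
  I := M.I
  ω := M.ω

/-- One step of the flow: fix an output value of a source, pass to the reduced model,
and restrict its causal structure to the dependency graph of the reduced parameters. -/
def flowStep (s : M.V) (os : M.O s) : CDModel := (M.reduce s os).restrictDep

end CDModel

/-- Reachability of one causal model from another by a finite sequence of flow steps,
each fixing an output value of a source vertex of the current causal structure. -/
inductive Reaches : CDModel → CDModel → Prop where
  | refl (M : CDModel) : Reaches M M
  | tail {M N : CDModel} (s : M.V) (hs : M.IsSource s) (os : M.O s)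
      (h : Reaches (M.flowStep s os) N) : Reaches M N

/-- Causal correlations, defined recursively: a family of correlations on at most one
agent is causal; and a correlation is causal if it decomposes as a convex combination
over a first agent `v` of a local conditional distribution for `v` times correlations
for the remaining agents (depending on `v`'s setting and result) that are again causal. -/
inductive IsCausal : ∀ (S : Type) (X A : S → Type), ((∀ v, X v) → (∀ v, A v) → ℝ) → Prop where
  | base {S : Type} [Fintype S] {X A : S → Type}
      (p : (∀ v, X v) → (∀ v, A v) → ℝ) (h : Fintype.card S ≤ 1) : IsCausal S X A p
  | step {S : Type} [Fintype S] [DecidableEq S] {X A : S → Type} [∀ v, Fintype (A v)]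
      (p : (∀ v, X v) → (∀ v, A v) → ℝ)
      (q : S → ℝ) (hq0 : ∀ v, 0 ≤ q v) (hq1 : ∑ v, q v = 1)
      (pv : ∀ v : S, X v → A v → ℝ)
      (hpv0 : ∀ v x a, 0 ≤ pv v x a) (hpv1 : ∀ v x, ∑ a, pv v x a = 1)
      (pr : ∀ v : S, X v → A v →
        (∀ u : {u : S // u ≠ v}, X u.1) → (∀ u : {u : S // u ≠ v}, A u.1) → ℝ)
      (hpr : ∀ v xv av, IsCausal {u : S // u ≠ v} (fun u => X u.1) (fun u => A u.1) (pr v xv av))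
      (hdec : ∀ x a, p x a =
        ∑ v, q v * pv v (x v) (a v) * pr v (x v) (a v) (fun u => x u.1) (fun u => a u.1)) :
      IsCausal S X A p

/-- Convenience constructor for classical-deterministic causal models. -/
abbrev mkModel (V : Type) [Fintype V] [DecidableEq V] (E : V → V → Prop) (O I : V → Type)
    [∀ v, Fintype (O v)] [∀ v, Nonempty (O v)] [∀ v, Fintype (I v)] [∀ v, Nonempty (I v)]
    (ω : ∀ v, (∀ ℓ, O ℓ) → I v) : CDModel :=
  { V := V, E := E, O := O, I := I, ω := ω }


section AuxStmt7

open Classical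

lemma dependsOnlyOn_dep' {V : Type} [Fintype V] [DecidableEq V] {O : V → Type} {α : Type}
    (f : (∀ v, O v) → α) : DependsOnlyOn f {ℓ | DependsNontriv f ℓ} := by
  classical
  have key : ∀ t : Finset V, ∀ o o' : ∀ v, O v, (∀ v, v ∉ t → o v = o' v) →
      (∀ v ∈ t, ¬ DependsNontriv f v) → f o = f o' := by
    intro t
    induction t using Finset.induction_on with
    | empty => intro o o' h _; exact congrArg f (funext fun v => h v (Finset.notMem_empty v))
    | @insert a t ha ih =>
      intro o o' h hnd
      have h1 : f o = f (Function.update o a (o' a)) := by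
        by_contra hne
        exact hnd a (Finset.mem_insert_self a t) ⟨o, Function.update o a (o' a),
          fun k hk => (Function.update_of_ne hk _ _).symm, hne⟩
      rw [h1]
      apply ih
      · intro v hv
        by_cases hva : v = a
        · subst hva; simp
        · rw [Function.update_of_ne hva]
          exact h v (by simp [hva, hv])
      · intro v hv; exact hnd v (Finset.mem_insert_of_mem hv)
  intro o o' h
  apply key (Finset.univ.filter fun v => ¬ DependsNontriv f v)
  · intro v hv
    simp only [Finset.mem_filter, Finset.mem_univ, true_and, not_not] at hv
    exact h v hv
  · intro v hv
    simp only [Finset.mem_filter] at hv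
    exact hv.2

lemma eq_split' {V : Type} [DecidableEq V] {A : V → Type} (s : V) (a b : ∀ v, A v) :
    a = b ↔ a s = b s ∧ (fun u : {u : V // u ≠ s} => a u.1) = fun u : {u : V // u ≠ s} => b u.1 := by
  constructor
  · rintro rfl; exact ⟨rfl, rfl⟩
  · rintro ⟨h1, h2⟩
    funext v
    by_cases h : v = s
    · subst h; exact h1
    · exact congrFun h2 ⟨v, h⟩

lemma ite_split' {V : Type} [DecidableEq V] {A : V → Type} (s : V) (a b : ∀ v, A v) :
    (if a = b then (1:ℝ) else 0) =
      (if a s = b s then 1 else 0) *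
      (if (fun u : {u : V // u ≠ s} => a u.1) = (fun u : {u : V // u ≠ s} => b u.1) then 1 else 0) := by
  by_cases h : a = b
  · simp [h]
  · rw [if_neg h]
    rcases not_and_or.mp (fun hc => h ((eq_split' s a b).mpr hc)) with h1 | h2
    · simp [h1]
    · simp [h2]

lemma constCausal : ∀ (n : ℕ) (S : Type) (_ : Fintype S) (_ : DecidableEq S)
    (X A : S → Type) (_ : ∀ v, Fintype (A v)) (c : ∀ v, A v),
    Fintype.card S ≤ n → IsCausal S X A (detCorr (fun _ => c)) := by
  intro n
  induction n with
  | zero =>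
    intro S fS dS X A fA c hcard
    exact IsCausal.base _ (le_trans hcard (by norm_num))
  | succ n ih =>
    intro S fS dS X A fA c hcard
    letI := fS; letI := dS; letI : ∀ v, Fintype (A v) := fA
    have hcard2 : Fintype.card S ≤ n + 1 := hcard
    by_cases h1 : Fintype.card S ≤ 1
    · exact IsCausal.base _ h1
    · have hne : Nonempty S := Fintype.card_pos_iff.mp (by omega)
      obtain ⟨v₀⟩ := hne
      refine IsCausal.step (detCorr (fun _ => c))
        (fun v => if v = v₀ then 1 else 0) (fun v => by split <;> norm_num)
        (by simp) 
        (fun v x a => if a = c v then 1 else 0)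
        (fun v x a => by split <;> norm_num)
        (fun v x => by simp)
        (fun v xv av => detCorr (fun _ => fun u : {u : S // u ≠ v} => c u.1))
        (fun v xv av => ?_) ?_
      · refine ih _ inferInstance inferInstance _ _ (fun u => inferInstance) _ ?_
        have h3 : Fintype.card {u : S // u ≠ v} < Fintype.card S :=
          Fintype.card_subtype_lt (x := v) (by simp)
        omega
      · intro x a
        rw [Finset.sum_eq_single v₀]
        · rw [if_pos rfl, one_mul]
          simp only [detCorr]
          exact ite_split' v₀ a c
        · intro b _ hb
          rw [if_neg hb, zero_mul, zero_mul]
        · intro h; exact absurd (Finset.mem_univ v₀) h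

end AuxStmt7

section Aux2Stmt7

open Classical

lemma extendAt_self' (M : CDModel) (s : M.V) (os : M.O s) (o : ∀ v : {v : M.V // v ≠ s}, M.O v.1) :
    M.extendAt s os o s = os := by
  rw [CDModel.extendAt, dif_pos rfl]
  exact cast_eq _ _

lemma extendAt_ne' (M : CDModel) (s : M.V) (os : M.O s) (o : ∀ v : {v : M.V // v ≠ s}, M.O v.1)
    (v : M.V) (h : v ≠ s) : M.extendAt s os o v = o ⟨v, h⟩ := by
  rw [CDModel.extendAt, dif_neg h]

lemma extendAt_eq_self' (M : CDModel) (s : M.V) (o : ∀ v, M.O v) :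
    M.extendAt s (o s) (fun u => o u.1) = o := by
  funext v
  by_cases h : v = s
  · subst h; exact extendAt_self' M v (o v) _
  · exact extendAt_ne' M s (o s) _ v h

lemma reduceConsistent (M : CDModel) (hcons : M.Consistent) (s : M.V) (os : M.O s) :
    (M.reduce s os).Consistent := by
  intro X' A' fX' nX' fA' nA' μ'
  classical
  let Xt : M.V → Type := fun v => ∀ h : v ≠ s, X' ⟨v, h⟩
  let At : M.V → Type := fun v => ∀ h : v ≠ s, A' ⟨v, h⟩
  have fT : ∀ (T : {v : M.V // v ≠ s} → Type) (fT' : ∀ u, Fintype (T u)),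
      ∀ v, Fintype (∀ h : v ≠ s, T ⟨v, h⟩) := by
    intro T fT' v
    by_cases h : v = s
    · exact Fintype.ofEquiv PUnit.{1}
        ⟨fun _ h' => absurd h h', fun _ => PUnit.unit, fun _ => rfl,
         fun f => funext fun h' => absurd h h'⟩
    · exact @Fintype.ofEquiv _ _ (fT' ⟨v, h⟩) ⟨fun t _ => t, fun f => f h, fun _ => rfl, fun _ => rfl⟩
  have fXt : ∀ v, Fintype (Xt v) := fT _ fX'
  have fAt : ∀ v, Fintype (At v) := fT _ fA'
  have nT : ∀ (T : {v : M.V // v ≠ s} → Type) (nT' : ∀ u, Nonempty (T u)),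
      ∀ v, Nonempty (∀ h : v ≠ s, T ⟨v, h⟩) := by
    intro T nT' v
    by_cases h : v = s
    · exact ⟨fun h' => absurd h h'⟩
    · exact ⟨fun h' => (nT' ⟨v, h⟩).some⟩
  have nXt : ∀ v, Nonempty (Xt v) := nT _ nX'
  have nAt : ∀ v, Nonempty (At v) := nT _ nA'
  let μt : ∀ v, Xt v × M.I v → At v × M.O v := fun v xi =>
    if h : v = s then (fun h' => absurd h h', cast (congrArg M.O h.symm) os)
    else ((fun _ => (μ' ⟨v, h⟩ (xi.1 h, xi.2)).1), (μ' ⟨v, h⟩ (xi.1 h, xi.2)).2)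
  obtain ⟨gt, hgt⟩ := hcons Xt At fXt nXt fAt nAt μt
  refine ⟨fun x' u => gt (fun v h => x' ⟨v, h⟩) u.1 u.2, ?_⟩
  intro x' a'
  dsimp only
  set xt : ∀ v, Xt v := fun v h => x' ⟨v, h⟩ with hxt
  set at' : ∀ v, At v := fun v h => a' ⟨v, h⟩ with hat
  have hμts : ∀ (xi : Xt s × M.I s), μt s xi = (fun h' => absurd rfl h', os) := by
    intro xi
    show (if h : s = s then _ else _) = _
    rw [dif_pos rfl]
    exact Prod.ext rfl rfl
  have hμtv : ∀ (v : M.V) (h : v ≠ s) (xi : Xt v × M.I v),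
      μt v xi = ((fun _ => (μ' ⟨v, h⟩ (xi.1 h, xi.2)).1), (μ' ⟨v, h⟩ (xi.1 h, xi.2)).2) := by
    intro v h xi
    show (if h : v = s then _ else _) = _
    rw [dif_neg h]
    rfl
  have hcard : Nat.card {io : (∀ u : (M.reduce s os).V, (M.reduce s os).I u) × (∀ u : (M.reduce s os).V, (M.reduce s os).O u) //
      (∀ u, (M.reduce s os).ω u io.2 = io.1 u) ∧ ∀ u, μ' u (x' u, io.1 u) = (a' u, io.2 u)} =
      Nat.card {io : (∀ v, M.I v) × (∀ v, M.O v) //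
      (∀ v, M.ω v io.2 = io.1 v) ∧ ∀ v, μt v (xt v, io.1 v) = (at' v, io.2 v)} := by
    apply Nat.card_congr
    refine ⟨fun t => ⟨(fun v => M.ω v (M.extendAt s os t.1.2), M.extendAt s os t.1.2), ?_, ?_⟩,
            fun t => ⟨(fun u => t.1.1 u.1, fun u => t.1.2 u.1), ?_, ?_⟩, ?_, ?_⟩
    · intro v; rfl
    · rcases t with ⟨⟨i', o'⟩, hω', hμ'⟩
      intro v
      by_cases h : v = s
      · subst h
        rw [hμts]
        refine Prod.ext ?_ ?_
        · funext h'; exact absurd rfl h'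
        · exact (extendAt_self' M v os o').symm
      · rw [hμtv v h]
        have hi : M.ω v (M.extendAt s os o') = i' ⟨v, h⟩ := hω' ⟨v, h⟩
        dsimp only
        rw [hi]
        have := hμ' ⟨v, h⟩
        refine Prod.ext ?_ ?_
        · funext h'
          show (μ' ⟨v, h⟩ (x' ⟨v, h⟩, i' ⟨v, h⟩)).1 = a' ⟨v, h⟩
          rw [this]
        · show (μ' ⟨v, h⟩ (x' ⟨v, h⟩, i' ⟨v, h⟩)).2 = M.extendAt s os o' v
          rw [this, extendAt_ne' M s os o' v h]
    · rcases t with ⟨⟨i, o⟩, hω, hμ⟩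
      intro u
      have hos : o s = os := by
        have := hμ s
        rw [hμts] at this
        exact (congrArg Prod.snd this).symm
      show M.ω u.1 (M.extendAt s os (fun w => o w.1)) = i u.1
      rw [← hos, extendAt_eq_self' M s o]
      exact hω u.1
    · rcases t with ⟨⟨i, o⟩, hω, hμ⟩
      intro u
      have := hμ u.1
      rw [hμtv u.1 u.2] at this
      have h1 := congrArg Prod.fst this
      have h2 := congrArg Prod.snd this
      refine Prod.ext ?_ ?_
      · exact congrFun h1 u.2
      · exact h2
    · rintro ⟨⟨i', o'⟩, hω', hμ'⟩
      refine Subtype.ext (Prod.ext ?_ ?_)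
      · funext u
        show M.ω u.1 (M.extendAt s os o') = i' u
        have := hω' u
        exact (Subtype.eta u u.2 ▸ this : _)
      · funext u
        exact extendAt_ne' M s os o' u.1 u.2
    · rintro ⟨⟨i, o⟩, hω, hμ⟩
      have hos : o s = os := by
        have := hμ s
        rw [hμts] at this
        exact (congrArg Prod.snd this).symm
      refine Subtype.ext (Prod.ext ?_ ?_)
      · funext v
        show M.ω v (M.extendAt s os (fun w => o w.1)) = i v
        rw [← hos, extendAt_eq_self' M s o]
        exact hω v
      · funext v
        show M.extendAt s os (fun w => o w.1) v = o v
        rw [← hos, extendAt_eq_self' M s o]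
  have hiff : (at' = gt xt) ↔ (a' = fun u : {v : M.V // v ≠ s} => gt xt u.1 u.2) := by
    constructor
    · intro h
      funext u
      exact congrFun (congrFun h u.1) u.2
    · intro h
      funext v h'
      exact congrFun h ⟨v, h'⟩
  refine hcard.trans ((hgt xt at').trans ?_)
  by_cases hh : at' = gt xt
  · rw [if_pos hh]
    exact (if_pos (hiff.mp hh)).symm
  · rw [if_neg hh]
    exact (if_neg (fun hc => hh (hiff.mpr hc))).symm

lemma mainLemmaStmt7 : ∀ (n : ℕ) (M : CDModel), Fintype.card M.V ≤ n →
    M.StructComp → M.Consistent →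
    (∀ N : CDModel, Reaches M N → 2 ≤ Fintype.card N.V → ∃ s : N.V, N.IsSource s) →
    ∀ (X A : M.V → Type) (_ : ∀ v, Fintype (X v)) (_ : ∀ v, Nonempty (X v))
      (_ : ∀ v, Fintype (A v)) (_ : ∀ v, Nonempty (A v))
      (μ : ∀ v, X v × M.I v → A v × M.O v)
      (g : (∀ v, X v) → ∀ v, A v), M.IsWitness X A μ g →
    IsCausal M.V X A (detCorr g) := by
  intro n
  induction n with
  | zero =>
    intro M hn _ _ _ X A _ _ _ _ μ g _
    exact IsCausal.base _ (by omega)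
  | succ n ih =>
    intro M hn hstruct hcons hreach X A fX nX fA nA μ g hg
    classical
    letI : ∀ v, Fintype (X v) := fX
    letI : ∀ v, Nonempty (X v) := nX
    letI : ∀ v, Fintype (A v) := fA
    letI : ∀ v, Nonempty (A v) := nA
    by_cases h1 : Fintype.card M.V ≤ 1
    · exact IsCausal.base _ h1
    · obtain ⟨s, hs⟩ := hreach M (Reaches.refl M) (by omega)
      set i₀ : M.I s := M.ω s (fun v => Classical.arbitrary (M.O v)) with hi₀
      have hconst : ∀ o, M.ω s o = i₀ := fun o =>
        hstruct s o _ (fun v hv => absurd hv (hs v))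
      set f : X s → A s := fun xs => (μ s (xs, i₀)).1 with hf
      set oS : X s → M.O s := fun xs => (μ s (xs, i₀)).2 with hoS
      have hNcons : ∀ xs : X s, (M.flowStep s (oS xs)).Consistent := fun xs =>
        reduceConsistent M hcons s (oS xs)
      have hGex : ∀ xs : X s, ∃ g' : (∀ u : {u : M.V // u ≠ s}, X u.1) → ∀ u : {u : M.V // u ≠ s}, A u.1,
          (M.flowStep s (oS xs)).IsWitness (fun u => X u.1) (fun u => A u.1)
            (fun u => μ u.1) g' :=
        fun xs => hNcons xs (fun u => X u.1) (fun u => A u.1)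
          (fun u => fX u.1) (fun u => nX u.1) (fun u => fA u.1) (fun u => nA u.1)
          (fun u => μ u.1)
      choose g' hg' using hGex
      have hIC : ∀ xs : X s,
          IsCausal {u : M.V // u ≠ s} (fun u => X u.1) (fun u => A u.1) (detCorr (g' xs)) := by
        intro xs
        have hcardN : Fintype.card (M.flowStep s (oS xs)).V ≤ n := by
          have h3 : Fintype.card {u : M.V // u ≠ s} < Fintype.card M.V :=
            Fintype.card_subtype_lt (x := s) (by simp)
          have h4 : Fintype.card (M.flowStep s (oS xs)).V = Fintype.card {u : M.V // u ≠ s} :=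
            Fintype.card_congr (Equiv.refl _)
          omega
        exact ih (M.flowStep s (oS xs)) hcardN (fun v => dependsOnlyOn_dep' _) (hNcons xs)
          (fun N' hr hc => hreach N' (Reaches.tail s hs (oS xs) hr) hc)
          _ _ (fun u => fX u.1) (fun u => nX u.1) (fun u => fA u.1) (fun u => nA u.1)
          (fun u => μ u.1) (g' xs) (hg' xs)
      have hKey : ∀ x : ∀ v, X v, g x s = f (x s) ∧
          (fun u : {u : M.V // u ≠ s} => g x u.1) = g' (x s) (fun u => x u.1) := by
        intro x
        have h1 := hg x (g x)
        rw [if_pos rfl] at h1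
        have hne : Nonempty {io : (∀ v, M.I v) × (∀ v, M.O v) //
            (∀ v, M.ω v io.2 = io.1 v) ∧ ∀ v, μ v (x v, io.1 v) = (g x v, io.2 v)} := by
          by_contra hc
          rw [not_nonempty_iff] at hc
          haveI := hc
          rw [Nat.card_of_isEmpty] at h1
          exact absurd h1 (by omega)
        obtain ⟨⟨⟨i, o⟩, hω, hμ⟩⟩ := hne
        have his : i s = i₀ := (hω s).symm.trans (hconst o)
        have hμs := hμ s
        dsimp only at hμs
        rw [his] at hμs
        have hgs : g x s = f (x s) := (congrArg Prod.fst hμs).symm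
        have hos : o s = oS (x s) := (congrArg Prod.snd hμs).symm
        refine ⟨hgs, ?_⟩
        by_contra hc
        have h2 : Nat.card {io : (∀ u : {u : M.V // u ≠ s}, M.I u.1) ×
              (∀ u : {u : M.V // u ≠ s}, M.O u.1) //
            (∀ u, M.ω u.1 (M.extendAt s (oS (x s)) io.2) = io.1 u) ∧
            ∀ u, μ u.1 (x u.1, io.1 u) = (g x u.1, io.2 u)} =
            (if (fun u : {u : M.V // u ≠ s} => g x u.1) = g' (x s) (fun u => x u.1)
              then 1 else 0) :=
          hg' (x s) (fun u => x u.1) (fun u => g x u.1)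
        rw [if_neg hc] at h2
        refine absurd h2 (Nat.card_ne_zero.mpr ⟨⟨⟨(fun u => i u.1, fun u => o u.1), ?_, ?_⟩⟩, ?_⟩)
        · intro u
          show M.ω u.1 (M.extendAt s (oS (x s)) (fun w => o w.1)) = i u.1
          rw [← hos, extendAt_eq_self' M s o]
          exact hω u.1
        · intro u
          exact hμ u.1
        · infer_instance
      refine IsCausal.step (detCorr g)
        (fun v => if v = s then 1 else 0) (fun v => by split <;> norm_num)
        (by simp)
        (Function.update (fun v (xv : X v) (av : A v) =>
            if av = Classical.arbitrary (A v) then (1:ℝ) else 0)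
          s (fun xs as => if as = f xs then 1 else 0))
        ?_ ?_
        (Function.update (fun v (xv : X v) (av : A v) =>
            detCorr (fun _ (u : {u : M.V // u ≠ v}) => Classical.arbitrary (A u.1)))
          s (fun xs _ => detCorr (g' xs)))
        ?_ ?_
      · intro v x a
        rcases eq_or_ne v s with rfl | h
        · simp only [Function.update_self]
          split <;> norm_num
        · simp only [Function.update_of_ne h]
          split <;> norm_num
      · intro v x
        rcases eq_or_ne v s with rfl | h
        · simp only [Function.update_self]
          simp
        · simp only [Function.update_of_ne h]
          simp
      · intro v xv av
        rcases eq_or_ne v s with rfl | h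
        · simp only [Function.update_self]
          exact hIC xv
        · simp only [Function.update_of_ne h]
          exact constCausal (Fintype.card {u : M.V // u ≠ v}) _ inferInstance inferInstance
            _ _ (fun u => inferInstance) _ le_rfl
      · intro x a
        obtain ⟨hk1, hk2⟩ := hKey x
        rw [Finset.sum_eq_single s]
        · rw [if_pos rfl, one_mul]
          simp only [Function.update_self]
          rw [← hk1]
          simp only [detCorr]
          rw [← hk2]
          exact ite_split' s a (g x)
        · intro b _ hb
          rw [if_neg hb, zero_mul, zero_mul]
        · intro h
          exact absurd (Finset.mem_univ s) h

end Aux2Stmt7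

/-- **Trivial leaves of the flow give causal correlations.**
Let `(D, F)` be a consistent causal model and suppose that every model reachable from
it by flow steps (fixing an output of a source of the current causal structure,
reducing, and restricting to the dependency graph of the reduced parameters) that
still has at least two vertices has at least one source vertex in its causal
structure.  Then for every family of interventions, the attained correlation
`p(a|x) = [g(x) = a]` is a causal correlation. -/
theorem stmt7 (M : CDModel) (hstruct : M.StructComp) (hcons : M.Consistent)
    (hreach : ∀ N : CDModel, Reaches M N → 2 ≤ Fintype.card N.V → ∃ s : N.V, N.IsSource s)
    (X A : M.V → Type) [∀ v, Fintype (X v)] [∀ v, Nonempty (X v)]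
    [∀ v, Fintype (A v)] [∀ v, Nonempty (A v)]
    (μ : ∀ v, X v × M.I v → A v × M.O v)
    (g : (∀ v, X v) → ∀ v, A v) (hg : M.IsWitness X A μ g) :
    IsCausal M.V X A (detCorr g) := by
  exact mainLemmaStmt7 (Fintype.card M.V) M le_rfl hstruct hcons hreach X A
    inferInstance inferInstance inferInstance inferInstance μ g hg
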